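/- Let q be a positive integer and let P be an induced path dangling oddly from a set X of vertices in a graph G with |X| ≥ R(q,q). Then there exists Y ⊆ X with |Y| ≥ q such that the graph (G − (X−Y) − E(Y))/E(P), obtained from G by deleting the vertices of X − Y, deleting all edges between vertices of Y, and contracting all edges of P, is a vertex-minor of G. -/

import Mathlib

open SimpleGraph

/-! ### Basic operations: local complementation, pivoting, vertex-minors -/

/-- Local complementation at a vertex `v`: the adjacency between each pair of
neighbours of `v` is toggled. -/
def localComp {V : Type*} (G : SimpleGraph V) (v : V) : SimpleGraph V where
  Adj a b := (G.Adj a b ∧ ¬(G.Adj v a ∧ G.Adj v b)) ∨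
    (a ≠ b ∧ ¬ G.Adj a b ∧ G.Adj v a ∧ G.Adj v b)
  symm := by
    constructor
    rintro a b (⟨h1, h2⟩ | ⟨h1, h2, h3, h4⟩)
    · exact Or.inl ⟨h1.symm, fun hc => h2 ⟨hc.2, hc.1⟩⟩
    · exact Or.inr ⟨h1.symm, fun hc => h2 hc.symm, h4, h3⟩
  loopless := by
    constructor
    rintro a (⟨h1, _⟩ | ⟨h1, _⟩)
    · exact G.irrefl h1
    · exact h1 rfl

/-- Pivoting an edge `uv`: `G ∧ uv = G * u * v * u`. -/
def pivotG {V : Type*} (G : SimpleGraph V) (u v : V) : SimpleGraph V :=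
  localComp (localComp (localComp G u) v) u

/-- Finite simple graphs, concretely represented on `Fin n`. -/
abbrev FinGraph := Σ n : ℕ, SimpleGraph (Fin n)

/-- One step in the construction of a vertex-minor: pass to an isomorphic copy,
perform a local complementation, or delete a vertex. -/
def VMStep (G H : FinGraph) : Prop :=
  Nonempty (G.2 ≃g H.2) ∨
  (∃ v : Fin G.1, Nonempty ((localComp G.2 v) ≃g H.2)) ∨
  (∃ v : Fin G.1, Nonempty ((G.2.induce {u | u ≠ v}) ≃g H.2))

/-- One step in the construction of a pivot-minor: pass to an isomorphic copy,
pivot an edge, or delete a vertex. -/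
def PMStep (G H : FinGraph) : Prop :=
  Nonempty (G.2 ≃g H.2) ∨
  (∃ u v : Fin G.1, G.2.Adj u v ∧ Nonempty ((pivotG G.2 u v) ≃g H.2)) ∨
  (∃ v : Fin G.1, Nonempty ((G.2.induce {u | u ≠ v}) ≃g H.2))

/-- `H` is a vertex-minor of `G` (both given concretely on `Fin _`). -/
def IsVertexMinorFG (H G : FinGraph) : Prop := Relation.ReflTransGen VMStep G H

/-- `H` is a pivot-minor of `G` (both given concretely on `Fin _`). -/
def IsPivotMinorFG (H G : FinGraph) : Prop := Relation.ReflTransGen PMStep G H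

/-- A finite graph represented concretely on `Fin (Nat.card V)`. -/
noncomputable def toFinGraph {V : Type*} [Finite V] (G : SimpleGraph V) : FinGraph :=
  ⟨Nat.card V, G.comap (Finite.equivFin V).symm⟩

/-- `H` is a vertex-minor of `G`. -/
def HasVertexMinor {V W : Type*} [Finite V] [Finite W]
    (G : SimpleGraph V) (H : SimpleGraph W) : Prop :=
  IsVertexMinorFG (toFinGraph H) (toFinGraph G)

/-- `H` is a pivot-minor of `G`. -/
def HasPivotMinor {V W : Type*} [Finite V] [Finite W]
    (G : SimpleGraph V) (H : SimpleGraph W) : Prop :=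
  IsPivotMinorFG (toFinGraph H) (toFinGraph G)

/-- A class of finite graphs closed under isomorphism, local complementation and
vertex deletion. -/
def VertexMinorClosed (𝒢 : Set FinGraph) : Prop :=
  (∀ G ∈ 𝒢, ∀ H : FinGraph, Nonempty (G.2 ≃g H.2) → H ∈ 𝒢) ∧
  (∀ G ∈ 𝒢, ∀ v : Fin G.1, (⟨G.1, localComp G.2 v⟩ : FinGraph) ∈ 𝒢) ∧
  (∀ G ∈ 𝒢, ∀ v : Fin G.1, toFinGraph (G.2.induce {u | u ≠ v}) ∈ 𝒢)

/-- A class of finite graphs closed under isomorphism, pivoting and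
vertex deletion. -/
def PivotMinorClosed (𝒢 : Set FinGraph) : Prop :=
  (∀ G ∈ 𝒢, ∀ H : FinGraph, Nonempty (G.2 ≃g H.2) → H ∈ 𝒢) ∧
  (∀ G ∈ 𝒢, ∀ u v : Fin G.1, G.2.Adj u v → (⟨G.1, pivotG G.2 u v⟩ : FinGraph) ∈ 𝒢) ∧
  (∀ G ∈ 𝒢, ∀ v : Fin G.1, toFinGraph (G.2.induce {u | u ≠ v}) ∈ 𝒢)

/-! ### Chromatic data -/

/-- The chromatic number, as a natural number (graphs here are finite). -/
noncomputable def chi {V : Type*} (G : SimpleGraph V) : ℕ := G.chromaticNumber.toNat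

/-- The ball of radius `ρ` around `v`: all vertices at distance at most `ρ` from `v`. -/
def ballSet {V : Type*} (G : SimpleGraph V) (v : V) (ρ : ℕ) : Set V :=
  {u | ∃ p : G.Walk v u, p.length ≤ ρ}

/-- `χ^{(ρ)}(G)`: the largest chromatic number of a `ρ`-ball of `G`. -/
noncomputable def chiBall {V : Type*} (G : SimpleGraph V) (ρ : ℕ) : ℕ :=
  ⨆ v : V, chi (G.induce (ballSet G v ρ))

/-- The distance from `u` to `v` is at least `n` (in particular, this holds
vacuously for unreachable pairs). -/
def distGE {V : Type*} (G : SimpleGraph V) (u v : V) (n : ℕ) : Prop :=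
  ∀ p : G.Walk u v, n ≤ p.length

/-- A stable (independent) set of vertices. -/
def IsStableSet {V : Type*} (G : SimpleGraph V) (A : Set V) : Prop :=
  ∀ a ∈ A, ∀ b ∈ A, ¬ G.Adj a b

/-- `A` covers `B`: every vertex of `B` has a neighbour in `A`. -/
def Covers {V : Type*} (G : SimpleGraph V) (A B : Set V) : Prop :=
  ∀ b ∈ B, ∃ a ∈ A, G.Adj a b

/-- `A` and `B` are anti-complete: there are no edges between them. -/
def AntiComplete {V : Type*} (G : SimpleGraph V) (A B : Set V) : Prop :=
  ∀ a ∈ A, ∀ b ∈ B, ¬ G.Adj a b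

/-- An induced path of `G`, given as a walk: it is a path, and the only edges of `G`
between its vertices are the edges of the path. -/
def IsInducedPath {V : Type*} (G : SimpleGraph V) {a b : V} (p : G.Walk a b) : Prop :=
  p.IsPath ∧ ∀ x ∈ p.support, ∀ y ∈ p.support, G.Adj x y → p.toSubgraph.Adj x y
/-! ### Big cliques and bloated trees -/

/-- A big clique: a maximal clique (w.r.t. vertex inclusion) of size at least 3. -/
def IsBigClique {V : Type*} (G : SimpleGraph V) (s : Finset V) : Prop :=
  G.IsClique ↑s ∧ 3 ≤ s.card ∧ ∀ t : Finset V, G.IsClique ↑t → s ⊆ t → t = s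

/-- Two vertices are related when they lie in a common big clique. -/
def bigCliqueRel {V : Type*} (G : SimpleGraph V) (u v : V) : Prop :=
  u = v ∨ ∃ s : Finset V, IsBigClique G s ∧ u ∈ s ∧ v ∈ s

/-- The graph obtained by contracting every big clique to a single vertex. -/
def contractBigCliques {V : Type*} (G : SimpleGraph V) :
    SimpleGraph (Quot (bigCliqueRel G)) where
  Adj a b := a ≠ b ∧ ∃ u v, G.Adj u v ∧ Quot.mk _ u = a ∧ Quot.mk _ v = b
  symm := by
    constructor
    rintro a b ⟨hne, u, v, h, hu, hv⟩
    exact ⟨hne.symm, v, u, h.symm, hv, hu⟩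
  loopless := ⟨fun a h => h.1 rfl⟩

/-- A bloated tree: every edge is in at most one big clique, vertices of a big
`k`-clique have degree at most `k`, and contracting all big cliques yields a tree. -/
def IsBloatedTree {V : Type*} (T : SimpleGraph V) : Prop :=
  (∀ u v, T.Adj u v → ∀ s t : Finset V, IsBigClique T s → IsBigClique T t →
    u ∈ s → v ∈ s → u ∈ t → v ∈ t → s = t) ∧
  (∀ s : Finset V, IsBigClique T s → ∀ v ∈ s, (T.neighborSet v).ncard ≤ s.card) ∧
  (contractBigCliques T).IsTree

/-- A leaf: a vertex of degree at most 1. -/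
def IsLeaf {V : Type*} (G : SimpleGraph V) (v : V) : Prop :=
  (G.neighborSet v).ncard ≤ 1

/-- A branching vertex of a bloated tree: a vertex of degree at least 3 that is
not contained in a triangle. -/
def IsBranching {V : Type*} (G : SimpleGraph V) (v : V) : Prop :=
  3 ≤ (G.neighborSet v).ncard ∧ ¬ ∃ a b, G.Adj v a ∧ G.Adj v b ∧ G.Adj a b

/-! ### Dangling paths and contractions -/

/-- The path `p` dangles from `X`: the set of vertices outside `p` with a
neighbour on `p` is exactly `X`. -/
def DanglesFrom {V : Type*} (G : SimpleGraph V) {a b : V} (p : G.Walk a b)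
    (X : Set V) : Prop :=
  {v | v ∉ p.support ∧ ∃ u ∈ p.support, G.Adj v u} = X

/-- The path `p` dangles oddly from `X`: moreover every vertex of `X` has an odd
number of neighbours on `p`. -/
def DanglesOddly {V : Type*} (G : SimpleGraph V) {a b : V} (p : G.Walk a b)
    (X : Set V) : Prop :=
  DanglesFrom G p X ∧ ∀ x ∈ X, Odd ({u | u ∈ p.support ∧ G.Adj x u}.ncard)

/-- Contract the set `S` to the single vertex `a₀` (for `a₀ ∈ S` with `G[S]`
connected this is contraction of all edges inside `S`). -/
def contractSet {V : Type*} (G : SimpleGraph V) (S : Set V) (a₀ : V) :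
    SimpleGraph {w : V // w ∉ S ∨ w = a₀} where
  Adj u v := u ≠ v ∧
    ((u.1 ∉ S ∧ v.1 ∉ S ∧ G.Adj u.1 v.1) ∨
     (u.1 = a₀ ∧ v.1 ∉ S ∧ ∃ s ∈ S, G.Adj s v.1) ∨
     (v.1 = a₀ ∧ u.1 ∉ S ∧ ∃ s ∈ S, G.Adj u.1 s))
  symm := by
    constructor
    rintro u v ⟨hne, h⟩
    refine ⟨hne.symm, ?_⟩
    rcases h with ⟨h1, h2, h3⟩ | ⟨h1, h2, s, hs, hadj⟩ | ⟨h1, h2, s, hs, hadj⟩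
    · exact Or.inl ⟨h2, h1, h3.symm⟩
    · exact Or.inr (Or.inr ⟨h1, h2, s, hs, hadj.symm⟩)
    · exact Or.inr (Or.inl ⟨h1, h2, s, hs, hadj.symm⟩)
  loopless := ⟨fun u h => h.1 rfl⟩

/-! ### Ramsey numbers -/

/-- Every graph on `Fin N` contains a clique of size `n` or a stable set of size `m`. -/
def RamseyProp (N n m : ℕ) : Prop :=
  ∀ G : SimpleGraph (Fin N),
    (∃ s : Finset (Fin N), G.IsNClique n s) ∨ (∃ s : Finset (Fin N), Gᶜ.IsNClique m s)

/-- The Ramsey number `R(n,m)`: the least `N` such that every graph on at least `N`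
vertices contains a clique of size `n` or a stable set of size `m`. -/
noncomputable def ramsey (n m : ℕ) : ℕ := sInf {N | ∀ M, N ≤ M → RamseyProp M n m}

/-! ### Subdivided complete bipartite graphs and interfered versions -/

/-- The vertex set of (an interfered) `K¹_{n,m}`: the `x_i`, the `y_j`, and the
subdivision vertices `z_{i,j}`. -/
abbrev IVert (n m : ℕ) := Fin n ⊕ Fin m ⊕ Fin n × Fin m

/-- `K¹_{n,m}`: the complete bipartite graph `K_{n,m}` with every edge subdivided
exactly once. -/
def KOneBip (n m : ℕ) : SimpleGraph (IVert n m) :=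
  SimpleGraph.fromRel (fun a b => ∃ i j,
    (a = Sum.inl i ∧ b = Sum.inr (Sum.inr (i, j))) ∨
    (a = Sum.inr (Sum.inl j) ∧ b = Sum.inr (Sum.inr (i, j))))

/-- The pairs that may be adjacent in an interfered `K¹_{n,m}`. -/
def InterferedAllowed (n m : ℕ) (a b : IVert n m) : Prop :=
  (∃ i j, a = Sum.inl i ∧ b = Sum.inr (Sum.inr (i, j))) ∨
  (∃ i j, a = Sum.inr (Sum.inl j) ∧ b = Sum.inr (Sum.inr (i, j))) ∨
  (∃ (k i : Fin n) (j : Fin m), k < i ∧ a = Sum.inl k ∧ b = Sum.inr (Sum.inr (i, j)))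

/-- An interfered `K¹_{n,m}`: all edges `x_i z_{i,j}` and `z_{i,j} y_j` are present,
and all other edges are of the form `x_k z_{i,j}` with `k < i`. -/
def IsInterfered (n m : ℕ) (G : SimpleGraph (IVert n m)) : Prop :=
  (∀ i j, G.Adj (Sum.inl i) (Sum.inr (Sum.inr (i, j)))) ∧
  (∀ i j, G.Adj (Sum.inr (Sum.inl j)) (Sum.inr (Sum.inr (i, j)))) ∧
  (∀ a b, G.Adj a b → InterferedAllowed n m a b ∨ InterferedAllowed n m b a)
/-! ### Long covers -/

/-- A long cover `(L⁰, L¹, L², L³)` of a set `C`. -/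
def IsLongCover {V : Type*} (G : SimpleGraph V) (L : Fin 4 → Set V) (C : Set V) : Prop :=
  (∀ i j : Fin 4, i ≠ j → Disjoint (L i) (L j)) ∧
  (∀ i : Fin 4, Disjoint (L i) C) ∧
  (G.induce (L 0)).Connected ∧
  Covers G (L 0) (L 1) ∧ Covers G (L 1) (L 2) ∧ Covers G (L 2) (L 3) ∧
  Covers G (L 3) C ∧
  AntiComplete G C (L 0) ∧ AntiComplete G C (L 1) ∧ AntiComplete G C (L 2) ∧
  AntiComplete G (L 0) (L 2) ∧ AntiComplete G (L 0) (L 3) ∧ AntiComplete G (L 1) (L 3)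

/-- A long `q`-cover of a set `C`. -/
def IsLongQCover {V : Type*} (G : SimpleGraph V) {q : ℕ}
    (ℒ : Fin q → Fin 4 → Set V) (C : Set V) : Prop :=
  (∀ i, IsLongCover G (ℒ i) C) ∧
  (∀ i j, i ≠ j →
    Disjoint (ℒ i 0 ∪ ℒ i 1 ∪ ℒ i 2 ∪ ℒ i 3) (ℒ j 0 ∪ ℒ j 1 ∪ ℒ j 2 ∪ ℒ j 3)) ∧
  (∀ i j, i < j →
    AntiComplete G (ℒ j 0 ∪ ℒ j 1 ∪ ℒ j 2) (ℒ i 0 ∪ ℒ i 1 ∪ ℒ i 2 ∪ ℒ i 3))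

/-! ### Multicovers -/

/-- A multicover `(N_x : x ∈ X)` of a set `C`, where `X` is presented as an
injective tuple `x : Fin m → V` (whose ordering is the total order on `X`). -/
def IsMulticover {V : Type*} (G : SimpleGraph V) {m : ℕ}
    (x : Fin m → V) (N : Fin m → Set V) (C : Set V) : Prop :=
  Function.Injective x ∧
  (∀ i, N i ⊆ G.neighborSet (x i)) ∧
  (∀ i, x i ∉ C) ∧
  (∀ i j, x i ∉ N j) ∧
  (∀ i, Disjoint (N i) C) ∧
  (∀ i j, i ≠ j → Disjoint (N i) (N j)) ∧
  (∀ i j, ¬ G.Adj (x i) (x j)) ∧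
  (∀ i, ∀ u ∈ C, ¬ G.Adj (x i) u) ∧
  (∀ i, ∀ u ∈ C, ∃ w ∈ N i, G.Adj w u) ∧
  (∀ i j, i < j → ∀ u ∈ N i, ¬ G.Adj (x j) u)

/-- A pure multicover: no `x ∈ X` has a neighbour in `N_y` for `y ≠ x`. -/
def IsPureMC {V : Type*} (G : SimpleGraph V) {m : ℕ}
    (x : Fin m → V) (N : Fin m → Set V) : Prop :=
  ∀ i j, i ≠ j → ∀ u ∈ N i, ¬ G.Adj (x j) u

/-- An impure multicover: for `x ≺ y`, `x` is complete to `N_y`. -/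
def IsImpureMC {V : Type*} (G : SimpleGraph V) {m : ℕ}
    (x : Fin m → V) (N : Fin m → Set V) : Prop :=
  ∀ i j, i < j → ∀ u ∈ N j, G.Adj (x i) u

/-! ### Auxiliary machinery for the proof -/

section VMAux


def comapIso {α β : Type*} (e : α ≃ β) (G : SimpleGraph β) : G.comap ⇑e ≃g G :=
  ⟨e, Iff.rfl⟩

lemma localComp_comap {α β : Type*} (e : α ≃ β) (G : SimpleGraph β) (w : α) :
    localComp (G.comap ⇑e) w = (localComp G (e w)).comap ⇑e := by
  ext a b
  simp only [localComp, comap_adj, ne_eq]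
  constructor
  · rintro (⟨h1, h2⟩ | ⟨h1, h2, h3⟩)
    · exact Or.inl ⟨h1, h2⟩
    · exact Or.inr ⟨fun hc => h1 (e.injective hc), h2, h3⟩
  · rintro (⟨h1, h2⟩ | ⟨h1, h2, h3⟩)
    · exact Or.inl ⟨h1, h2⟩
    · exact Or.inr ⟨fun hc => h1 (congrArg e hc), h2, h3⟩

variable {V : Type} [Fintype V]

lemma vm_refl (G : SimpleGraph V) : HasVertexMinor G G := Relation.ReflTransGen.refl

lemma vm_trans {W U : Type} [Fintype W] [Fintype U] {G : SimpleGraph V}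
    {F : SimpleGraph W} {H : SimpleGraph U} (h1 : HasVertexMinor G F)
    (h2 : HasVertexMinor F H) : HasVertexMinor G H :=
  Relation.ReflTransGen.trans h1 h2

lemma vm_iso {W U : Type} [Fintype W] [Fintype U] {G : SimpleGraph V}
    {H : SimpleGraph W} {H' : SimpleGraph U} (φ : H ≃g H')
    (h : HasVertexMinor G H) : HasVertexMinor G H' := by
  refine Relation.ReflTransGen.tail h (Or.inl ⟨?_⟩)
  exact ((comapIso _ H).trans φ).trans (comapIso _ H').symm

lemma vm_localComp (G : SimpleGraph V) (v : V) :
    HasVertexMinor G (localComp G v) := by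
  refine Relation.ReflTransGen.single (Or.inr (Or.inl ⟨Finite.equivFin V v, ⟨?_⟩⟩))
  have h : localComp ((toFinGraph G).2) (Finite.equivFin V v) =
      (toFinGraph (localComp G v)).2 := by
    show localComp (G.comap ⇑(Finite.equivFin V).symm) _ = _
    rw [localComp_comap]
    congr 1
    simp
  rw [h]
  exact RelIso.refl _

lemma vm_deleteVertex (G : SimpleGraph V) (v : V) :
    HasVertexMinor G (G.induce {u | u ≠ v}) := by
  refine Relation.ReflTransGen.single (Or.inr (Or.inr ⟨Finite.equivFin V v, ⟨?_⟩⟩))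
  refine RelIso.trans ?_ (comapIso (Finite.equivFin {u : V | u ≠ v}).symm _).symm
  refine ⟨Equiv.subtypeEquiv (Finite.equivFin V).symm (fun u => ?_), ?_⟩
  · simp [Equiv.symm_apply_eq]; exact not_congr ⟨fun h => by subst h; exact (Finite.equivFin V).symm_apply_apply v, fun h => by subst h; exact ((Finite.equivFin V).apply_symm_apply u).symm⟩
  · intro a b; rfl

def LCr {V : Type*} (G H : SimpleGraph V) : Prop :=
  Relation.ReflTransGen (fun A B => ∃ v, B = localComp A v) G H

lemma LCr.tail' {V : Type*} {G H : SimpleGraph V} (h : LCr G H) (v : V) :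
    LCr G (localComp H v) := Relation.ReflTransGen.tail h ⟨v, rfl⟩

lemma vm_of_LCr {G H : SimpleGraph V} (h : LCr G H) : HasVertexMinor G H := by
  induction h with
  | refl => exact vm_refl G
  | tail _ hstep ih =>
      obtain ⟨v, rfl⟩ := hstep
      exact vm_trans ih (vm_localComp _ v)

def induceUnivIso (G : SimpleGraph V) : G.induce (Set.univ) ≃g G :=
  ⟨Equiv.Set.univ V, Iff.rfl⟩

def induceInduceEquiv (s : Set V) (w : ↥s) :
    {u : ↥s // u ∈ {u : ↥s | u ≠ w}} ≃ ↥(s \ {w.1}) where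
  toFun u := ⟨u.1.1, u.1.2, fun hc => u.2 (Subtype.ext hc)⟩
  invFun x := ⟨⟨x.1, x.2.1⟩, fun hc => x.2.2 (congrArg Subtype.val hc)⟩
  left_inv u := by cases u with | mk a h => cases a; rfl
  right_inv x := rfl

def induceInduceIso (G : SimpleGraph V) (s : Set V) (w : ↥s) :
    (G.induce s).induce {u : ↥s | u ≠ w} ≃g G.induce (s \ {w.1}) :=
  ⟨induceInduceEquiv s w, Iff.rfl⟩

lemma vm_induce_compl (G : SimpleGraph V) (D : Finset V) :
    HasVertexMinor G (G.induce ((↑D : Set V)ᶜ)) := by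
  classical
  induction D using Finset.induction_on with
  | empty =>
      have h : ((↑(∅ : Finset V) : Set V))ᶜ = Set.univ := by simp
      rw [h]
      exact vm_iso (_root_.induceUnivIso G).symm (vm_refl G)
  | @insert v D hv ih =>
      have hvM : v ∈ ((↑D : Set V))ᶜ := by simpa using hv
      have step := vm_deleteVertex (G.induce ((↑D : Set V))ᶜ) ⟨v, hvM⟩
      have hset : ((↑D : Set V))ᶜ \ {v} = ((↑(insert v D) : Set V))ᶜ := by
        ext x; simp [and_comm]
      have iso := induceInduceIso G ((↑D : Set V))ᶜ ⟨v, hvM⟩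
      rw [hset] at iso
      exact vm_trans ih (vm_iso iso step)

lemma vm_induce (G : SimpleGraph V) (s : Set V) :
    HasVertexMinor G (G.induce s) := by
  classical
  have h : ((↑(sᶜ.toFinset) : Set V))ᶜ = s := by simp
  rw [← h]
  exact vm_induce_compl G _

end VMAux

section Aux
variable {V : Type*} {G : SimpleGraph V}
variable {V : Type*} {G : SimpleGraph V}

lemma localComp_adj {v a b : V} : (localComp G v).Adj a b ↔
    ((G.Adj a b ∧ ¬(G.Adj v a ∧ G.Adj v b)) ∨
    (a ≠ b ∧ ¬ G.Adj a b ∧ G.Adj v a ∧ G.Adj v b)) := Iff.rfl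

lemma localComp_adj_self {v b : V} : (localComp G v).Adj v b ↔ G.Adj v b := by
  simp [localComp_adj, G.irrefl]

lemma localComp_adj_eq {v a b : V} (h : ¬ G.Adj v a ∨ ¬ G.Adj v b) :
    (localComp G v).Adj a b ↔ G.Adj a b := by
  rw [localComp_adj]; tauto

lemma localComp_adj_toggle {v a b : V} (ha : G.Adj v a) (hb : G.Adj v b) (hab : a ≠ b) :
    (localComp G v).Adj a b ↔ ¬ G.Adj a b := by
  rw [localComp_adj]; tauto

set_option maxHeartbeats 2000000 in
lemma pivot_adj_swap {u v : V} (huv : G.Adj u v) {y : V} (hyu : y ≠ u) (hyv : y ≠ v) :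
    (pivotG G u v).Adj u y ↔ G.Adj v y := by
  have h2 : ¬ G.Adj u u := G.irrefl
  have h3 : ¬ G.Adj v v := G.irrefl
  have hne : u ≠ v := huv.ne
  have hne' : v ≠ u := huv.ne'
  have hyu' : u ≠ y := Ne.symm hyu
  have hyv' : v ≠ y := Ne.symm hyv
  have c1 : G.Adj u y ↔ G.Adj y u := G.adj_comm u y
  have c2 : G.Adj v y ↔ G.Adj y v := G.adj_comm v y
  have c3 : G.Adj u v ↔ G.Adj v u := G.adj_comm u v
  simp only [pivotG, localComp_adj, ← c1, ← c2, ← c3]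
  by_cases a1 : G.Adj u y <;> by_cases a2 : G.Adj v y <;> simp_all

set_option maxHeartbeats 2000000 in
lemma pivot_adj_other {u v : V} (huv : G.Adj u v) {x y : V}
    (hxu : x ≠ u) (hxv : x ≠ v) (hyu : y ≠ u) (hyv : y ≠ v) :
    (pivotG G u v).Adj x y ↔
      (G.Adj x y ↔ ((G.Adj u x ∧ G.Adj v y) ↔ (G.Adj v x ∧ G.Adj u y))) := by
  have h2 : ¬ G.Adj u u := G.irrefl
  have h3 : ¬ G.Adj v v := G.irrefl
  have hne : u ≠ v := huv.ne
  have hne' : v ≠ u := huv.ne'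
  have hyu' : u ≠ y := Ne.symm hyu
  have hyv' : v ≠ y := Ne.symm hyv
  have hxu' : u ≠ x := Ne.symm hxu
  have hxv' : v ≠ x := Ne.symm hxv
  have c1 : G.Adj u y ↔ G.Adj y u := G.adj_comm u y
  have c2 : G.Adj v y ↔ G.Adj y v := G.adj_comm v y
  have c3 : G.Adj u v ↔ G.Adj v u := G.adj_comm u v
  have c4 : G.Adj u x ↔ G.Adj x u := G.adj_comm u x
  have c5 : G.Adj v x ↔ G.Adj x v := G.adj_comm v x
  by_cases hxy : x = y
  · subst hxy
    simp only [pivotG, localComp_adj, ← c1, ← c3, ← c4, G.irrefl]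
    by_cases a1 : G.Adj u x <;> by_cases a2 : G.Adj v x <;> simp_all
  · simp only [pivotG, localComp_adj, ← c1, ← c2, ← c3, ← c4, ← c5]
    by_cases a0 : G.Adj x y <;> by_cases a1 : G.Adj u x <;> by_cases a2 : G.Adj v x <;>
      by_cases a3 : G.Adj u y <;> by_cases a4 : G.Adj v y <;> simp_all

def Ind {V : Type*} (G : SimpleGraph V) : List V → Prop
  | [] => True
  | a :: t => (∀ w ∈ t.tail, ¬ G.Adj a w) ∧ Ind G t

lemma ind_congr {V : Type*} {G G' : SimpleGraph V} :
    ∀ (l : List V), (∀ x ∈ l, ∀ y ∈ l, (G'.Adj x y ↔ G.Adj x y)) → Ind G l → Ind G' l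
  | [], _, _ => trivial
  | a :: t, h, hl => by
    refine ⟨fun w hw hc => hl.1 w hw ?_, ind_congr t (fun x hx y hy =>
      h x (List.mem_cons_of_mem a hx) y (List.mem_cons_of_mem a hy)) hl.2⟩
    exact (h a List.mem_cons_self w
      (List.mem_cons_of_mem a (List.mem_of_mem_tail hw))).mp hc

lemma chain'_congr {V : Type*} {R S : V → V → Prop} :
    ∀ (l : List V), (∀ x ∈ l, ∀ y ∈ l, (R x y ↔ S x y)) → List.Chain' R l → List.Chain' S l
  | [], _, _ => List.isChain_nil
  | [_], _, _ => List.isChain_singleton _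
  | a :: b :: t, h, hc => by
    simp only [List.Chain', List.isChain_cons_cons] at hc ⊢
    exact ⟨(h a (by simp) b (by simp)).mp hc.1,
      chain'_congr (b :: t) (fun x hx y hy =>
        h x (List.mem_cons_of_mem a hx) y (List.mem_cons_of_mem a hy)) hc.2⟩

lemma cnt_finite {V : Type*} (l : List V) (P : V → Prop) :
    {u | u ∈ l ∧ P u}.Finite :=
  Set.Finite.subset (List.finite_toSet l) (fun u hu => hu.1)

lemma cnt_cons_pos {V : Type*} {P : V → Prop} {a : V} {l : List V}
    (ha : a ∉ l) (hP : P a) :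
    {u | u ∈ a :: l ∧ P u}.ncard = {u | u ∈ l ∧ P u}.ncard + 1 := by
  have hset : {u | u ∈ a :: l ∧ P u} = insert a {u | u ∈ l ∧ P u} := by
    ext u
    simp only [List.mem_cons, Set.mem_insert_iff, Set.mem_setOf_eq]
    constructor
    · rintro ⟨rfl | h1, h2⟩
      · exact Or.inl rfl
      · exact Or.inr ⟨h1, h2⟩
    · rintro (rfl | ⟨h1, h2⟩)
      · exact ⟨Or.inl rfl, hP⟩
      · exact ⟨Or.inr h1, h2⟩
  rw [hset, Set.ncard_insert_of_notMem (fun hc => ha hc.1) (cnt_finite l P)]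

lemma cnt_cons_neg {V : Type*} {P : V → Prop} {a : V} {l : List V} (hP : ¬ P a) :
    {u | u ∈ a :: l ∧ P u}.ncard = {u | u ∈ l ∧ P u}.ncard := by
  congr 1
  ext u
  simp only [List.mem_cons, Set.mem_setOf_eq]
  constructor
  · rintro ⟨rfl | h1, h2⟩
    · exact absurd h2 hP
    · exact ⟨h1, h2⟩
  · rintro ⟨h1, h2⟩
    exact ⟨Or.inr h1, h2⟩

lemma cnt_congr {V : Type*} {P Q : V → Prop} (l : List V)
    (h : ∀ u ∈ l, (P u ↔ Q u)) :
    {u | u ∈ l ∧ P u}.ncard = {u | u ∈ l ∧ Q u}.ncard := by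
  congr 1
  ext u
  simp only [Set.mem_setOf_eq]
  exact and_congr_right (fun hu => h u hu)

set_option maxHeartbeats 4000000 in
lemma mainLemma {V : Type} (G₀ : SimpleGraph V) (X : Set V) :
    ∀ (n : ℕ) (G : SimpleGraph V) (A : Set V) (a : V) (t : List V),
      (a :: t).length ≤ n →
      LCr G₀ G →
      (a :: t).Nodup →
      List.Chain' G.Adj (a :: t) →
      (∀ x ∈ (a :: t), x ∈ A) →
      (∀ x ∈ X, x ∈ A) →
      (∀ x ∈ X, x ∉ (a :: t)) →
      Ind G (a :: t) →
      (∀ w, w ∈ A → w ∉ (a :: t) → w ∉ X → ∀ u ∈ (a :: t), ¬ G.Adj w u) →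
      (∀ x ∈ X, Odd ({u | u ∈ (a :: t) ∧ G.Adj x u}.ncard)) →
      ∃ F : SimpleGraph V, LCr G₀ F ∧
        (∀ u v, u ∈ A → v ∈ A → u ∉ (a :: t) → v ∉ (a :: t) → (u ∉ X ∨ v ∉ X) →
          (F.Adj u v ↔ G.Adj u v)) ∧
        (∀ x ∈ X, F.Adj a x) ∧
        (∀ w, w ∈ A → w ∉ X → w ∉ (a :: t) → ¬ F.Adj a w) := by
  intro n
  induction n with
  | zero => intro G A a t hlen; simp at hlen
  | succ n ih =>
    intro G A a t hlen hLC hnd hch hmemA hXA hXl hInd h8 h9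
    match t with
    | [] =>
      refine ⟨G, hLC, fun u v _ _ _ _ _ => Iff.rfl, ?_, ?_⟩
      · intro x hx
        by_cases hadj : G.Adj x a
        · exact hadj.symm
        · have h9x := h9 x hx
          rw [cnt_cons_neg hadj] at h9x
          simp [Nat.odd_iff] at h9x
      · intro w hwA hwX hwl hadj
        exact h8 w hwA hwl hwX a (by simp) hadj.symm
    | [c] =>
      have hac : G.Adj a c := (List.isChain_cons_cons.mp hch).1
      have hca : G.Adj c a := hac.symm
      have hanotc : a ∉ [c] := (List.nodup_cons.mp hnd).1
      have hax : ∀ x ∈ X, x ≠ a := fun x hx h => hXl x hx (by simp [h])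
      have hcx : ∀ x ∈ X, x ≠ c := fun x hx h => hXl x hx (by simp [h])
      refine ⟨localComp G c, hLC.tail' c, ?_, ?_, ?_⟩
      · intro u v huA hvA hul hvl hXor
        apply localComp_adj_eq
        rcases hXor with h | h
        · exact Or.inl (fun hadj => h8 u huA hul h c (by simp) hadj.symm)
        · exact Or.inr (fun hadj => h8 v hvA hvl h c (by simp) hadj.symm)
      · intro x hx
        have h9x := h9 x hx
        by_cases hxc : G.Adj x c
        · have htog := localComp_adj_toggle (G := G) hca hxc.symm (Ne.symm (hax x hx))
          rw [htog]
          intro hcon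
          rw [cnt_cons_pos hanotc hcon.symm, cnt_cons_pos List.not_mem_nil hxc] at h9x
          simp [Nat.odd_iff] at h9x
        · have heq := localComp_adj_eq (G := G) (v := c) (a := a) (b := x)
            (Or.inr (fun h => hxc h.symm))
          rw [heq]
          by_cases hxa : G.Adj x a
          · exact hxa.symm
          · rw [cnt_cons_neg hxa, cnt_cons_neg hxc] at h9x
            simp [Nat.odd_iff] at h9x
      · intro w hwA hwX hwl
        have h1 : ¬ G.Adj w a := h8 w hwA hwl hwX a (by simp)
        have h2 : ¬ G.Adj w c := h8 w hwA hwl hwX c (by simp)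
        rw [localComp_adj_eq (Or.inr (fun h => h2 h.symm))]
        exact fun h => h1 h.symm
    | c :: d :: r =>
      obtain ⟨hanotin, hnd2⟩ := List.nodup_cons.mp hnd
      obtain ⟨hcnotin, hnd3⟩ := List.nodup_cons.mp hnd2
      obtain ⟨hdnotin, hndr⟩ := List.nodup_cons.mp hnd3
      have hac : G.Adj a c := (List.isChain_cons_cons.mp hch).1
      have hcd : G.Adj c d := (List.isChain_cons_cons.mp (List.isChain_cons_cons.mp hch).2).1
      have hchdr : List.Chain' G.Adj (d :: r) :=
        (List.isChain_cons_cons.mp (List.isChain_cons_cons.mp hch).2).2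
      have hIa : ∀ w ∈ d :: r, ¬ G.Adj a w := hInd.1
      have hIc : ∀ w ∈ r, ¬ G.Adj c w := hInd.2.1
      have hInddr : Ind G (d :: r) := hInd.2.2
      set G' := pivotG G a c with hG'
      have hane : a ≠ c := hac.ne
      have hdrna : ∀ w ∈ d :: r, w ≠ a := by
        intro w hw h
        subst h
        exact hanotin (List.mem_cons_of_mem c hw)
      have hdrnc : ∀ w ∈ d :: r, w ≠ c := by
        intro w hw h
        subst h
        exact hcnotin hw
      have hdna : d ≠ a := hdrna d (by simp)
      have hdnc : d ≠ c := hdrnc d (by simp)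
      have hrna : ∀ w ∈ r, w ≠ a := fun w hw => hdrna w (List.mem_cons_of_mem d hw)
      have hrnc : ∀ w ∈ r, w ≠ c := fun w hw => hdrnc w (List.mem_cons_of_mem d hw)
      have keySwap : ∀ w, w ≠ a → w ≠ c → (G'.Adj a w ↔ G.Adj c w) :=
        fun w h1 h2 => pivot_adj_swap hac h1 h2
      have keyOther : ∀ x y, x ≠ a → x ≠ c → y ≠ a → y ≠ c →
          (G'.Adj x y ↔ (G.Adj x y ↔ ((G.Adj a x ∧ G.Adj c y) ↔ (G.Adj c x ∧ G.Adj a y)))) :=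
        fun x y h1 h2 h3 h4 => pivot_adj_other hac h1 h2 h3 h4
      have keyEq2 : ∀ x y, x ≠ a → x ≠ c → y ≠ a → y ≠ c → ¬ G.Adj a y → ¬ G.Adj c y →
          (G'.Adj x y ↔ G.Adj x y) := by
        intro x y h1 h2 h3 h4 h5 h6
        rw [keyOther x y h1 h2 h3 h4]
        tauto
      have keyEqX : ∀ x y, x ≠ a → x ≠ c → y ≠ a → y ≠ c → ¬ G.Adj a x → ¬ G.Adj c x →
          (G'.Adj x y ↔ G.Adj x y) := by
        intro x y h1 h2 h3 h4 h5 h6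
        rw [keyOther x y h1 h2 h3 h4]
        tauto
      have keyEqdr : ∀ x ∈ d :: r, ∀ y ∈ d :: r, (G'.Adj x y ↔ G.Adj x y) := by
        intro x hx y hy
        rw [keyOther x y (hdrna x hx) (hdrnc x hx) (hdrna y hy) (hdrnc y hy)]
        have h5 : ¬ G.Adj a x := hIa x hx
        have h6 : ¬ G.Adj a y := hIa y hy
        tauto
      have hlen' : (a :: d :: r).length ≤ n := by
        simp only [List.length_cons] at hlen ⊢; omega
      have hLC' : LCr G₀ G' := ((hLC.tail' a).tail' c).tail' a
      have hnd' : (a :: d :: r).Nodup := by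
        rw [List.nodup_cons]
        refine ⟨fun h => hanotin (List.mem_cons_of_mem c h), hnd3⟩
      have hch' : List.Chain' G'.Adj (a :: d :: r) := by
        simp only [List.Chain', List.isChain_cons_cons]
        refine ⟨(keySwap d hdna hdnc).mpr hcd, chain'_congr (d :: r) ?_ hchdr⟩
        intro x hx y hy
        exact (keyEqdr x hx y hy).symm
      have hmemA' : ∀ x ∈ a :: d :: r, x ∈ A \ {c} := by
        intro x hx
        rw [List.mem_cons] at hx
        rcases hx with rfl | hx
        · exact ⟨hmemA x (by simp), hane⟩
        · exact ⟨hmemA x (by simp only [List.mem_cons] at hx ⊢; tauto), hdrnc x hx⟩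
      have hXA' : ∀ x ∈ X, x ∈ A \ {c} := fun x hx =>
        ⟨hXA x hx, fun h => hXl x hx (by simp only [Set.mem_singleton_iff] at h; simp [h])⟩
      have hXl' : ∀ x ∈ X, x ∉ a :: d :: r := by
        intro x hx h
        apply hXl x hx
        simp only [List.mem_cons] at h ⊢
        tauto
      have hInd' : Ind G' (a :: d :: r) := by
        refine ⟨?_, ind_congr (d :: r) keyEqdr hInddr⟩
        intro w hw
        rw [keySwap w (hrna w hw) (hrnc w hw)]
        exact hIc w hw
      have h8' : ∀ w, w ∈ A \ {c} → w ∉ (a :: d :: r) → w ∉ X →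
          ∀ u ∈ (a :: d :: r), ¬ G'.Adj w u := by
        intro w hwA hwl hwX u hu
        have hwna : w ≠ a := fun h => hwl (by simp [h])
        have hwnc : w ≠ c := hwA.2
        have hwnl : w ∉ (a :: c :: d :: r) := by
          simp only [List.mem_cons, not_or] at hwl ⊢
          exact ⟨hwl.1, fun h => hwnc h, hwl.2⟩
        have hw8 := h8 w hwA.1 hwnl hwX
        have hwa : ¬ G.Adj a w := fun h => hw8 a (by simp) h.symm
        have hwc : ¬ G.Adj c w := fun h => hw8 c (by simp) h.symm
        rw [List.mem_cons] at hu
        rcases hu with rfl | hu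
        · rw [G'.adj_comm, keySwap w hwna hwnc]
          exact hwc
        · rw [keyEqX w u hwna hwnc (hdrna u hu) (hdrnc u hu) hwa hwc]
          exact hw8 u (by simp only [List.mem_cons] at hu ⊢; tauto)
      have h9' : ∀ x ∈ X, Odd ({u | u ∈ (a :: d :: r) ∧ G'.Adj x u}.ncard) := by
        intro x hx
        have hxna : x ≠ a := fun h => hXl x hx (by simp [h])
        have hxnc : x ≠ c := fun h => hXl x hx (by simp [h])
        have e1 : G'.Adj x a ↔ G.Adj x c := by
          rw [G'.adj_comm, keySwap x hxna hxnc, G.adj_comm]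
        have e2 : G'.Adj x d ↔ (G.Adj x d ↔ ¬ G.Adj x a) := by
          rw [keyOther x d hxna hxnc hdna hdnc]
          have h1 : ¬ G.Adj a d := hIa d (by simp)
          have h2 : G.Adj a x ↔ G.Adj x a := G.adj_comm a x
          have h3 : G.Adj c x ↔ G.Adj x c := G.adj_comm c x
          tauto
        have hrc : {u | u ∈ r ∧ G'.Adj x u}.ncard = {u | u ∈ r ∧ G.Adj x u}.ncard := by
          apply cnt_congr
          intro u hu
          exact keyEq2 x u hxna hxnc (hrna u hu) (hrnc u hu)
            (hIa u (List.mem_cons_of_mem d hu)) (hIc u hu)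
        have h9x := h9 x hx
        have hanotdr : a ∉ d :: r := fun h => hanotin (List.mem_cons_of_mem c h)
        by_cases hA1 : G.Adj x a <;> by_cases hA2 : G.Adj x c <;> by_cases hA3 : G.Adj x d
        · rw [cnt_cons_pos hanotin hA1, cnt_cons_pos hcnotin hA2, cnt_cons_pos hdnotin hA3] at h9x
          rw [cnt_cons_pos hanotdr (e1.mpr hA2), cnt_cons_neg (fun h => by have := e2.mp h; tauto), hrc]
          rw [Nat.odd_iff] at h9x ⊢
          omega
        · rw [cnt_cons_pos hanotin hA1, cnt_cons_pos hcnotin hA2, cnt_cons_neg hA3] at h9x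
          rw [cnt_cons_pos hanotdr (e1.mpr hA2), cnt_cons_pos hdnotin (e2.mpr (by tauto)), hrc]
          rw [Nat.odd_iff] at h9x ⊢
          omega
        · rw [cnt_cons_pos hanotin hA1, cnt_cons_neg hA2, cnt_cons_pos hdnotin hA3] at h9x
          rw [cnt_cons_neg (fun h => hA2 (e1.mp h)), cnt_cons_neg (fun h => by have := e2.mp h; tauto), hrc]
          rw [Nat.odd_iff] at h9x ⊢
          omega
        · rw [cnt_cons_pos hanotin hA1, cnt_cons_neg hA2, cnt_cons_neg hA3] at h9x
          rw [cnt_cons_neg (fun h => hA2 (e1.mp h)), cnt_cons_pos hdnotin (e2.mpr (by tauto)), hrc]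
          rw [Nat.odd_iff] at h9x ⊢
          omega
        · rw [cnt_cons_neg hA1, cnt_cons_pos hcnotin hA2, cnt_cons_pos hdnotin hA3] at h9x
          rw [cnt_cons_pos hanotdr (e1.mpr hA2), cnt_cons_pos hdnotin (e2.mpr (by tauto)), hrc]
          rw [Nat.odd_iff] at h9x ⊢
          omega
        · rw [cnt_cons_neg hA1, cnt_cons_pos hcnotin hA2, cnt_cons_neg hA3] at h9x
          rw [cnt_cons_pos hanotdr (e1.mpr hA2), cnt_cons_neg (fun h => by have := e2.mp h; tauto), hrc]
          rw [Nat.odd_iff] at h9x ⊢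
          omega
        · rw [cnt_cons_neg hA1, cnt_cons_neg hA2, cnt_cons_pos hdnotin hA3] at h9x
          rw [cnt_cons_neg (fun h => hA2 (e1.mp h)), cnt_cons_pos hdnotin (e2.mpr (by tauto)), hrc]
          rw [Nat.odd_iff] at h9x ⊢
          omega
        · rw [cnt_cons_neg hA1, cnt_cons_neg hA2, cnt_cons_neg hA3] at h9x
          rw [cnt_cons_neg (fun h => hA2 (e1.mp h)), cnt_cons_neg (fun h => by have := e2.mp h; tauto), hrc]
          rw [Nat.odd_iff] at h9x ⊢
          omega
      obtain ⟨F, hF1, hF2, hF3, hF4⟩ := ih G' (A \ {c}) a (d :: r) hlen' hLC' hnd' hch'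
        hmemA' hXA' hXl' hInd' h8' h9'
      refine ⟨F, hF1, ?_, hF3, ?_⟩
      · intro u v huA hvA hul hvl hXor
        simp only [List.mem_cons, not_or] at hul hvl
        have huA' : u ∈ A \ {c} := ⟨huA, hul.2.1⟩
        have hvA' : v ∈ A \ {c} := ⟨hvA, hvl.2.1⟩
        have hul' : u ∉ (a :: d :: r) := by
          simp only [List.mem_cons, not_or]; exact ⟨hul.1, hul.2.2⟩
        have hvl' : v ∉ (a :: d :: r) := by
          simp only [List.mem_cons, not_or]; exact ⟨hvl.1, hvl.2.2⟩
        rw [hF2 u v huA' hvA' hul' hvl' hXor]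
        have hulfull : u ∉ (a :: c :: d :: r) := by
          simp only [List.mem_cons, not_or]; tauto
        have hvlfull : v ∉ (a :: c :: d :: r) := by
          simp only [List.mem_cons, not_or]; tauto
        rcases hXor with h | h
        · have hu8 := h8 u huA hulfull h
          have hua : ¬ G.Adj a u := fun hh => hu8 a (by simp) hh.symm
          have huc : ¬ G.Adj c u := fun hh => hu8 c (by simp) hh.symm
          exact keyEqX u v hul.1 hul.2.1 hvl.1 hvl.2.1 hua huc
        · have hv8 := h8 v hvA hvlfull h
          have hva : ¬ G.Adj a v := fun hh => hv8 a (by simp) hh.symm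
          have hvc : ¬ G.Adj c v := fun hh => hv8 c (by simp) hh.symm
          exact keyEq2 u v hul.1 hul.2.1 hvl.1 hvl.2.1 hva hvc
      · intro w hwA hwX hwl
        simp only [List.mem_cons, not_or] at hwl
        refine hF4 w ⟨hwA, hwl.2.1⟩ hwX ?_
        simp only [List.mem_cons, not_or]
        exact ⟨hwl.1, hwl.2.2⟩

end Aux

section RamseyAux
lemma isNClique_comap {α β : Type*} [DecidableEq β] {G : SimpleGraph β} {f : α → β}
    (hf : Function.Injective f) {n : ℕ} {s : Finset α}
    (h : (G.comap f).IsNClique n s) : G.IsNClique n (s.image f) := by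
  constructor
  · rintro x hx y hy hxy
    simp only [Finset.coe_image, Set.mem_image, Finset.mem_coe] at hx hy
    obtain ⟨x', hx', rfl⟩ := hx
    obtain ⟨y', hy', rfl⟩ := hy
    exact h.1 hx' hy' (fun hc => hxy (congrArg f hc))
  · rw [Finset.card_image_of_injective _ hf]; exact h.2

lemma compl_comap_eq {α β : Type*} {G : SimpleGraph β} {f : α → β}
    (hf : Function.Injective f) : (G.comap f)ᶜ = (Gᶜ).comap f := by
  ext x y
  simp only [compl_adj, comap_adj, ne_eq]
  constructor
  · rintro ⟨h1, h2⟩; exact ⟨fun hc => h1 (hf hc), h2⟩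
  · rintro ⟨h1, h2⟩; exact ⟨fun hc => h1 (congrArg f hc), h2⟩

lemma ramsey_exists : ∀ (k n m : ℕ), n + m ≤ k →
    ∃ N : ℕ, ∀ (V : Type) (_ : Fintype V) (G : SimpleGraph V), N ≤ Fintype.card V →
      (∃ s : Finset V, G.IsNClique n s) ∨ (∃ s : Finset V, Gᶜ.IsNClique m s) := by
  intro k
  induction k with
  | zero =>
      intro n m hnm
      refine ⟨0, fun V _ G _ => Or.inl ⟨∅, ?_⟩⟩
      have hn : n = 0 := by omega
      subst hn; simp [isNClique_empty]
  | succ k ih =>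
      intro n m hnm
      classical
      match n, m with
      | 0, m => exact ⟨0, fun V _ G _ => Or.inl ⟨∅, by simp [isNClique_empty]⟩⟩
      | n+1, 0 => exact ⟨0, fun V _ G _ => Or.inr ⟨∅, by simp [isNClique_empty]⟩⟩
      | n+1, m+1 =>
        obtain ⟨N₁, hN₁⟩ := ih n (m+1) (by omega)
        obtain ⟨N₂, hN₂⟩ := ih (n+1) m (by omega)
        refine ⟨N₁ + N₂ + 1, fun V instV G hcard => ?_⟩
        classical
        have hpos : 0 < Fintype.card V := by omega
        obtain ⟨v₀⟩ := Fintype.card_pos_iff.mp hpos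
        set A : Finset V := Finset.univ.filter (fun w => G.Adj v₀ w) with hA
        set B : Finset V := Finset.univ.filter (fun w => w ≠ v₀ ∧ ¬ G.Adj v₀ w) with hB
        have hdisj : Disjoint A B := by
          rw [Finset.disjoint_left]
          intro x hx hx'
          simp [hA, hB] at hx hx'
          exact hx'.2 hx
        have hunion : A ∪ B = Finset.univ.erase v₀ := by
          ext w
          simp only [Finset.mem_union, hA, hB, Finset.mem_filter, Finset.mem_univ,
            true_and, Finset.mem_erase, and_true]
          constructor
          · rintro (h | h)
            · exact h.ne'
            · exact h.1
          · intro h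
            by_cases hadj : G.Adj v₀ w
            · exact Or.inl hadj
            · exact Or.inr ⟨h, hadj⟩
        have hcard2 : A.card + B.card = Fintype.card V - 1 := by
          rw [← Finset.card_union_of_disjoint hdisj, hunion, Finset.card_erase_of_mem
            (Finset.mem_univ v₀), Finset.card_univ]
        have hAv : v₀ ∉ A := by simp [hA]
        have hBv : v₀ ∉ B := by simp [hB]
        by_cases hcA : N₁ ≤ A.card
        · have hcA' : N₁ ≤ Fintype.card ↥A := by rwa [Fintype.card_coe]
          rcases hN₁ ↥A inferInstance (G.comap (fun x : ↥A => (x : V))) hcA' with ⟨s, hs⟩ | ⟨s, hs⟩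
          · refine Or.inl ⟨insert v₀ (s.image (fun x : ↥A => (x : V))), ?_⟩
            refine (isNClique_comap Subtype.val_injective hs).insert ?_
            intro b hb
            simp only [Finset.mem_image] at hb
            obtain ⟨x, _, rfl⟩ := hb
            have hx2 : (x : V) ∈ Finset.univ.filter (fun w => G.Adj v₀ w) := x.2
            exact (Finset.mem_filter.mp hx2).2
          · rw [compl_comap_eq Subtype.val_injective] at hs
            exact Or.inr ⟨s.image (fun x : ↥A => (x : V)),
              isNClique_comap Subtype.val_injective hs⟩
        · have hcB : N₂ ≤ B.card := by omega
          have hcB' : N₂ ≤ Fintype.card ↥B := by rwa [Fintype.card_coe]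
          rcases hN₂ ↥B inferInstance (G.comap (fun x : ↥B => (x : V))) hcB' with ⟨s, hs⟩ | ⟨s, hs⟩
          · exact Or.inl ⟨s.image (fun x : ↥B => (x : V)),
              isNClique_comap Subtype.val_injective hs⟩
          · rw [compl_comap_eq Subtype.val_injective] at hs
            refine Or.inr ⟨insert v₀ (s.image (fun x : ↥B => (x : V))), ?_⟩
            refine (isNClique_comap Subtype.val_injective hs).insert ?_
            intro b hb
            simp only [Finset.mem_image] at hb
            obtain ⟨x, _, rfl⟩ := hb
            have hx2 : (x : V) ∈ Finset.univ.filter (fun w => w ≠ v₀ ∧ ¬ G.Adj v₀ w) := x.2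
            have hx3 := (Finset.mem_filter.mp hx2).2
            rw [compl_adj]
            exact ⟨fun hc => hx3.1 hc.symm, hx3.2⟩

lemma ramsey_spec {n m M : ℕ} (h : ramsey n m ≤ M) : RamseyProp M n m := by
  obtain ⟨N, hN⟩ := ramsey_exists (n + m) n m le_rfl
  have hmem : N ∈ {N' | ∀ M', N' ≤ M' → RamseyProp M' n m} := by
    intro M' hM' G
    have := hN (Fin M') inferInstance G (by simpa using hM')
    exact this
  exact Nat.sInf_mem (Set.nonempty_of_mem hmem) M h

end RamseyAux

section Glue

lemma ind_of_induced {V : Type} {G : SimpleGraph V} :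
    ∀ {a b : V} (p : G.Walk a b), p.IsPath →
    (∀ x ∈ p.support, ∀ y ∈ p.support, G.Adj x y → p.toSubgraph.Adj x y) →
    Ind G p.support := by
  intro a b p
  induction p with
  | nil => exact fun _ _ => ⟨by simp, trivial⟩
  | @cons a c b h q ihq =>
    intro hp hind
    rw [SimpleGraph.Walk.support_cons]
    have hq : q.IsPath := hp.of_cons
    have hanot : a ∉ q.support := (SimpleGraph.Walk.cons_isPath_iff h q).mp hp |>.2
    constructor
    · intro w hw hadj
      have hwsup : w ∈ q.support := List.mem_of_mem_tail hw
      have hwnc : w ≠ c := by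
        intro hc
        subst hc
        have := hq.support_nodup
        rw [q.support_eq_cons] at this
        exact (List.nodup_cons.mp this).1 hw
      have hsub := hind a (by simp) w
        (by rw [SimpleGraph.Walk.support_cons]; exact List.mem_cons_of_mem a hwsup) hadj
      rw [SimpleGraph.Walk.toSubgraph] at hsub
      rcases hsub with hsub | hsub
      · rw [SimpleGraph.subgraphOfAdj_adj] at hsub
        rw [Sym2.eq_iff] at hsub
        rcases hsub with ⟨_, h2⟩ | ⟨h1, _⟩
        · exact hwnc h2.symm
        · exact hanot (by rw [h1]; exact hwsup)
      · exact hanot (SimpleGraph.Walk.mem_verts_toSubgraph q |>.mp hsub.fst_mem)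
    · refine ihq hq ?_
      intro x hx y hy hadj
      have hsub := hind x (by rw [SimpleGraph.Walk.support_cons]; exact List.mem_cons_of_mem a hx)
        y (by rw [SimpleGraph.Walk.support_cons]; exact List.mem_cons_of_mem a hy) hadj
      rw [SimpleGraph.Walk.toSubgraph] at hsub
      rcases hsub with hsub | hsub
      · rw [SimpleGraph.subgraphOfAdj_adj, Sym2.eq_iff] at hsub
        rcases hsub with ⟨h1, _⟩ | ⟨h1, _⟩
        · exact absurd (show a ∈ q.support by rw [h1]; exact hx) hanot
        · exact absurd (show a ∈ q.support by rw [h1]; exact hy) hanot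
      · exact hsub

end Glue


section Final

lemma contractSet_adj {V : Type*} (G : SimpleGraph V) (S : Set V) (a₀ : V)
    (u v : {w : V // w ∉ S ∨ w = a₀}) :
    (contractSet G S a₀).Adj u v ↔ (u ≠ v ∧
      ((u.1 ∉ S ∧ v.1 ∉ S ∧ G.Adj u.1 v.1) ∨
       (u.1 = a₀ ∧ v.1 ∉ S ∧ ∃ s ∈ S, G.Adj s v.1) ∨
       (v.1 = a₀ ∧ u.1 ∉ S ∧ ∃ s ∈ S, G.Adj u.1 s))) := Iff.rfl

lemma finalCore {V : Type} [Fintype V] (G : SimpleGraph V) {a b : V} (p : G.Walk a b)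
    (X Y : Set V) (F' : SimpleGraph V)
    (hXiff : ∀ v, v ∈ X ↔ (v ∉ p.support ∧ ∃ u ∈ p.support, G.Adj v u))
    (hYX : Y ⊆ X)
    (ha : a ∈ p.support)
    (hvm : HasVertexMinor G F')
    (hP1 : ∀ u v, u ∉ p.support → v ∉ p.support → (u ∉ X ∨ v ∉ X) → (F'.Adj u v ↔ G.Adj u v))
    (hP2 : ∀ u ∈ Y, ∀ v ∈ Y, ¬ F'.Adj u v)
    (hP3 : ∀ x ∈ Y, F'.Adj a x)
    (hP4 : ∀ w, w ∉ X → w ∉ p.support → ¬ F'.Adj a w) :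
    ∃ a₀ : {w : V // w ∉ X \ Y}, a₀.1 ∈ p.support ∧
      HasVertexMinor G
        (contractSet
          ((G.deleteEdges {e | ∃ u ∈ Y, ∃ v ∈ Y, e = s(u, v)}).induce
            {w | w ∉ X \ Y})
          {w | w.1 ∈ p.support} a₀) := by
  classical
  have hsuppX : ∀ u ∈ p.support, u ∉ X := fun u hu hx => ((hXiff u).mp hx).1 hu
  have haX : a ∉ X \ Y := fun hc => hsuppX a ha hc.1
  refine ⟨⟨a, haX⟩, ha, ?_⟩
  set Ede : Set (Sym2 V) := {e | ∃ u ∈ Y, ∃ v ∈ Y, e = s(u, v)} with hEdeDef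
  have hEde : ∀ u v : V, s(u, v) ∈ Ede ↔ (u ∈ Y ∧ v ∈ Y) := by
    intro u v
    constructor
    · rintro ⟨u', hu', v', hv', heq⟩
      rcases Sym2.eq_iff.mp heq with ⟨rfl, rfl⟩ | ⟨rfl, rfl⟩
      · exact ⟨hu', hv'⟩
      · exact ⟨hv', hu'⟩
    · rintro ⟨h1, h2⟩
      exact ⟨u, h1, v, h2, rfl⟩
  have hdel : ∀ (x y : V) (hx : x ∉ X \ Y) (hy : y ∉ X \ Y),
      (((G.deleteEdges Ede).induce {w | w ∉ X \ Y}).Adj ⟨x, hx⟩ ⟨y, hy⟩) ↔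
        (G.Adj x y ∧ ¬(x ∈ Y ∧ y ∈ Y)) := by
    intro x y hx hy
    show (G.deleteEdges Ede).Adj x y ↔ _
    rw [SimpleGraph.deleteEdges_adj, hEde x y]
  have hexY : ∀ (y : V) (hy : y ∉ X \ Y), y ∉ p.support →
      ((∃ s ∈ {w : {w : V // w ∉ X \ Y} | w.1 ∈ p.support},
        ((G.deleteEdges Ede).induce {w | w ∉ X \ Y}).Adj s ⟨y, hy⟩) ↔ y ∈ Y) := by
    intro y hy hynp
    constructor
    · rintro ⟨s, hsS, hadj⟩
      obtain ⟨hGadj, -⟩ := (hdel s.1 y s.2 hy).mp hadj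
      have hyX : y ∈ X := (hXiff y).mpr ⟨hynp, s.1, hsS, hGadj.symm⟩
      by_contra hyY
      exact hy ⟨hyX, hyY⟩
    · intro hyY
      obtain ⟨-, u, hu, hadj⟩ := (hXiff y).mp (hYX hyY)
      refine ⟨⟨u, fun hc => hsuppX u hu hc.1⟩, hu, ?_⟩
      rw [hdel u y _ hy]
      exact ⟨hadj.symm, fun hc => hsuppX u hu (hYX hc.1)⟩
  set T : Set V := {w | w ∉ X \ Y ∧ (w ∉ p.support ∨ w = a)} with hT
  have step1 : HasVertexMinor G (F'.induce T) := vm_trans hvm (vm_induce F' T)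
  refine vm_iso (?_ : (F'.induce T) ≃g _) step1
  refine ⟨⟨fun w => ⟨⟨w.1, w.2.1⟩, ?_⟩, fun w => ⟨w.1.1, w.1.2, ?_⟩, fun w => rfl, fun w => rfl⟩, ?_⟩
  · rcases w.2.2 with h | h
    · exact Or.inl h
    · exact Or.inr (Subtype.ext h)
  · rcases w.2 with h | h
    · exact Or.inl h
    · exact Or.inr (congrArg Subtype.val h)
  · rintro ⟨x, hx1, hx2⟩ ⟨y, hy1, hy2⟩
    show (contractSet _ _ _).Adj _ _ ↔ F'.Adj x y
    rw [contractSet_adj]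
    have hneiff : ∀ (px py),
        ((⟨⟨x, hx1⟩, px⟩ : {w : {w : V // w ∉ X \ Y} //
            w ∉ {w : {w : V // w ∉ X \ Y} | w.1 ∈ p.support} ∨ w = ⟨a, haX⟩}) =
          ⟨⟨y, hy1⟩, py⟩) ↔ x = y := by
      intro px py
      constructor
      · intro h
        exact congrArg (fun z => z.1.1) h
      · intro h
        apply Subtype.ext
        apply Subtype.ext
        exact h
    by_cases hxa : x = a
    · subst hxa
      by_cases hya : y = x
      · subst hya
        constructor
        · rintro ⟨hne, -⟩
          exact absurd rfl ((hneiff _ _).not.mp hne)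
        · intro h
          exact absurd h F'.irrefl
      · have hynp : y ∉ p.support := hy2.resolve_right hya
        constructor
        · rintro ⟨hne, hD⟩
          rcases hD with ⟨h1, -, -⟩ | ⟨-, -, hex⟩ | ⟨h1, -, -⟩
          · exact absurd ha h1
          · exact hP3 y ((hexY y hy1 hynp).mp hex)
          · exact absurd (congrArg Subtype.val h1) hya
        · intro hadj
          have hyY : y ∈ Y := by
            by_contra hyY
            have hyX : y ∉ X := fun hc => hy1 ⟨hc, hyY⟩
            exact hP4 y hyX hynp hadj
          refine ⟨(hneiff _ _).not.mpr (fun hc => hya hc.symm), Or.inr (Or.inl ?_)⟩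
          exact ⟨rfl, fun hS => hynp hS, (hexY y hy1 hynp).mpr hyY⟩
    · by_cases hya : y = a
      · subst hya
        have hxnp : x ∉ p.support := hx2.resolve_right hxa
        constructor
        · rintro ⟨hne, hD⟩
          rcases hD with ⟨-, h1, -⟩ | ⟨h1, -, -⟩ | ⟨-, -, hex⟩
          · exact absurd ha h1
          · exact absurd (congrArg Subtype.val h1) hxa
          · have hex' : ∃ s ∈ {w : {w : V // w ∉ X \ Y} | w.1 ∈ p.support},
                ((G.deleteEdges Ede).induce {w | w ∉ X \ Y}).Adj s ⟨x, hx1⟩ := by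
              obtain ⟨s, hsS, hadj⟩ := hex
              exact ⟨s, hsS, hadj.symm⟩
            exact (hP3 x ((hexY x hx1 hxnp).mp hex')).symm
        · intro hadj
          have hxY : x ∈ Y := by
            by_contra hxY
            have hxX : x ∉ X := fun hc => hx1 ⟨hc, hxY⟩
            exact hP4 x hxX hxnp hadj.symm
          refine ⟨(hneiff _ _).not.mpr hxa, Or.inr (Or.inr ?_)⟩
          refine ⟨rfl, fun hS => hxnp hS, ?_⟩
          obtain ⟨s, hsS, hadj'⟩ := (hexY x hx1 hxnp).mpr hxY
          exact ⟨s, hsS, hadj'.symm⟩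
      · have hxnp : x ∉ p.support := hx2.resolve_right hxa
        have hynp : y ∉ p.support := hy2.resolve_right hya
        constructor
        · rintro ⟨hne, hD⟩
          rcases hD with ⟨-, -, hadj⟩ | ⟨h1, -, -⟩ | ⟨h1, -, -⟩
          · obtain ⟨hGxy, hnY⟩ := (hdel x y hx1 hy1).mp hadj
            have hor : x ∉ X ∨ y ∉ X := by
              by_cases hxY : x ∈ Y
              · have hyY : y ∉ Y := fun hc => hnY ⟨hxY, hc⟩
                exact Or.inr (fun hc => hy1 ⟨hc, hyY⟩)
              · exact Or.inl (fun hc => hx1 ⟨hc, hxY⟩)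
            exact (hP1 x y hxnp hynp hor).mpr hGxy
          · exact absurd (congrArg Subtype.val h1) hxa
          · exact absurd (congrArg Subtype.val h1) hya
        · intro hadj
          have hne : x ≠ y := F'.ne_of_adj hadj
          have hnY : ¬ (x ∈ Y ∧ y ∈ Y) := fun hc => hP2 x hc.1 y hc.2 hadj
          have hor : x ∉ X ∨ y ∉ X := by
            by_cases hxY : x ∈ Y
            · have hyY : y ∉ Y := fun hc => hnY ⟨hxY, hc⟩
              exact Or.inr (fun hc => hy1 ⟨hc, hyY⟩)
            · exact Or.inl (fun hc => hx1 ⟨hc, hxY⟩)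
          refine ⟨(hneiff _ _).not.mpr hne, Or.inl ?_⟩
          exact ⟨fun hS => hxnp hS, fun hS => hynp hS,
            (hdel x y hx1 hy1).mpr ⟨(hP1 x y hxnp hynp hor).mp hadj, hnY⟩⟩

end Final

/-- **Lemma 6.2.** If an induced path `P` dangles oddly from `X` with `|X| ≥ R(q,q)`,
then there is `Y ⊆ X` with `|Y| ≥ q` such that `(G − (X−Y) − E(Y))/E(P)` is a
vertex-minor of `G`. -/

theorem contract_dangling_path (V : Type) [Fintype V] (q : ℕ) (hq : 0 < q)
    (G : SimpleGraph V) {a b : V} (p : G.Walk a b) (hp : IsInducedPath G p)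
    (X : Set V) (hd : DanglesOddly G p X) (hX : ramsey q q ≤ X.ncard) :
    ∃ Y : Set V, Y ⊆ X ∧ q ≤ Y.ncard ∧
      ∃ a₀ : {w : V // w ∉ X \ Y}, a₀.1 ∈ p.support ∧
        HasVertexMinor G
          (contractSet
            ((G.deleteEdges {e | ∃ u ∈ Y, ∃ v ∈ Y, e = s(u, v)}).induce
              {w | w ∉ X \ Y})
            {w | w.1 ∈ p.support} a₀) := by
  classical
  obtain ⟨hdf, hodd⟩ := hd
  have hXiff : ∀ v, v ∈ X ↔ (v ∉ p.support ∧ ∃ u ∈ p.support, G.Adj v u) := by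
    intro v
    rw [← hdf]
    rfl
  have hsuppX : ∀ u ∈ p.support, u ∉ X := fun u hu hx => ((hXiff u).mp hx).1 hu
  have hsupp : p.support = a :: p.support.tail := p.support_eq_cons
  have ha : a ∈ p.support := p.start_mem_support
  have hm := mainLemma G X (a :: p.support.tail).length G Set.univ a p.support.tail
    le_rfl Relation.ReflTransGen.refl
    (by rw [← hsupp]; exact hp.1.support_nodup)
    (by rw [← hsupp]; exact p.isChain_adj_support)
    (fun x _ => Set.mem_univ x)
    (fun x _ => Set.mem_univ x)
    (by rw [← hsupp]; exact fun x hx h => hsuppX x h hx) ?_ ?_ ?_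
  rotate_left
  · rw [← hsupp]; exact ind_of_induced p hp.1 hp.2
  · rw [← hsupp]
    intro w _ hwl hwX u hu hadj
    exact hwX ((hXiff w).mpr ⟨hwl, u, hu, hadj⟩)
  · rw [← hsupp]; exact hodd
  obtain ⟨F, hF1, hF2, hF3, hF4⟩ := hm
  rw [← hsupp] at hF2 hF4
  have hF2' : ∀ u v, u ∉ p.support → v ∉ p.support → (u ∉ X ∨ v ∉ X) →
      (F.Adj u v ↔ G.Adj u v) :=
    fun u v h1 h2 h3 => hF2 u v (Set.mem_univ u) (Set.mem_univ v) h1 h2 h3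
  have hF4' : ∀ w, w ∉ X → w ∉ p.support → ¬ F.Adj a w :=
    fun w h1 h2 => hF4 w (Set.mem_univ w) h1 h2
  -- Ramsey step
  have hcardX : Fintype.card ↥X = X.ncard := by
    rw [← Nat.card_coe_set_eq, Nat.card_eq_fintype_card]
  set eX : ↥X ≃ Fin (X.ncard) := Fintype.equivFinOfCardEq hcardX with heX
  set f : Fin (X.ncard) → V := fun i => ((eX.symm i : ↥X) : V) with hf
  have hfinj : Function.Injective f := by
    intro i j hij
    exact eX.symm.injective (Subtype.val_injective hij)
  have hfX : ∀ i, f i ∈ X := fun i => (eX.symm i).2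
  have hRP : RamseyProp (X.ncard) q q := ramsey_spec hX
  rcases hRP (F.comap f) with ⟨s, hs⟩ | ⟨s, hs⟩
  · -- clique case : use F' = localComp F a
    set Y : Set V := ↑(s.image f) with hYdef
    have hYX : Y ⊆ X := by
      intro y hy
      obtain ⟨i, _, rfl⟩ := Finset.mem_image.mp hy
      exact hfX i
    have hYcard : Y.ncard = q := by
      rw [hYdef, Set.ncard_coe_finset, Finset.card_image_of_injective _ hfinj]
      exact hs.2
    have hYadj : ∀ u ∈ Y, ∀ v ∈ Y, u ≠ v → F.Adj u v := by
      intro u hu v hv huv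
      obtain ⟨i, hi, rfl⟩ := Finset.mem_image.mp hu
      obtain ⟨j, hj, rfl⟩ := Finset.mem_image.mp hv
      have hij : i ≠ j := fun hc => huv (by rw [hc])
      exact hs.1 (Finset.mem_coe.mpr hi) (Finset.mem_coe.mpr hj) hij
    refine ⟨Y, hYX, le_of_eq hYcard.symm, ?_⟩
    refine finalCore G p X Y (localComp F a) hXiff hYX ha
      (vm_of_LCr (hF1.tail' a)) ?_ ?_ ?_ ?_
    · intro u v h1 h2 h3
      have hcond : ¬ F.Adj a u ∨ ¬ F.Adj a v := by
        rcases h3 with h | h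
        · exact Or.inl (hF4' u h h1)
        · exact Or.inr (hF4' v h h2)
      rw [localComp_adj_eq hcond]
      exact hF2' u v h1 h2 h3
    · intro u hu v hv hadj
      by_cases huv : u = v
      · subst huv; exact (localComp F a).irrefl hadj
      · rw [localComp_adj_toggle (hF3 u (hYX hu)) (hF3 v (hYX hv)) huv] at hadj
        exact hadj (hYadj u hu v hv huv)
    · intro x hx
      rw [localComp_adj_self]
      exact hF3 x (hYX hx)
    · intro w h1 h2
      rw [localComp_adj_self]
      exact hF4' w h1 h2
  · -- stable case : use F itself
    set Y : Set V := ↑(s.image f) with hYdef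
    have hYX : Y ⊆ X := by
      intro y hy
      obtain ⟨i, _, rfl⟩ := Finset.mem_image.mp hy
      exact hfX i
    have hYcard : Y.ncard = q := by
      rw [hYdef, Set.ncard_coe_finset, Finset.card_image_of_injective _ hfinj]
      exact hs.2
    have hYnon : ∀ u ∈ Y, ∀ v ∈ Y, ¬ F.Adj u v := by
      intro u hu v hv hadj
      obtain ⟨i, hi, rfl⟩ := Finset.mem_image.mp hu
      obtain ⟨j, hj, rfl⟩ := Finset.mem_image.mp hv
      by_cases hij : i = j
      · subst hij; exact F.irrefl hadj
      · have := hs.1 (Finset.mem_coe.mpr hi) (Finset.mem_coe.mpr hj) hij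
        rw [SimpleGraph.compl_adj] at this
        exact this.2 hadj
    refine ⟨Y, hYX, le_of_eq hYcard.symm, ?_⟩
    exact finalCore G p X Y F hXiff hYX ha (vm_of_LCr hF1)
      hF2' hYnon (fun x hx => hF3 x (hYX hx)) hF4'
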